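/- Let A = [[0,1,0],[−1,0,−1],[0,1,0]] and let T = π/(2√2). Then exp(T·A) applied to the vector (0, 1, 0) equals (1/√2, 0, 1/√2). -/

import Mathlib

open Matrix Real

attribute [local instance] Matrix.linftyOpNormedAddCommGroup Matrix.linftyOpNormedRing
  Matrix.linftyOpNormedAlgebra

noncomputable section

private abbrev Amat : Matrix (Fin 3) (Fin 3) ℝ := !![0, 1, 0; -1, 0, -1; 0, 1, 0]

private lemma hAv : Amat.mulVec ![0,1,0] = ![1,0,1] := by
  funext i; fin_cases i <;>
    simp [Matrix.mulVec, dotProduct, Fin.sum_univ_three]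

private lemma hAu : Amat.mulVec ![1,0,1] = (-2 : ℝ) • ![0,1,0] := by
  funext i; fin_cases i <;>
    simp [Matrix.mulVec, dotProduct, Fin.sum_univ_three] <;> norm_num

private lemma hA2 : (Amat ^ 2).mulVec ![0,1,0] = (-2 : ℝ) • ![0,1,0] := by
  rw [pow_two, ← Matrix.mulVec_mulVec, hAv, hAu]

private lemma Apow_even (k : ℕ) :
    (Amat ^ (2*k)).mulVec ![0,1,0] = ((-2:ℝ)^k) • ![0,1,0] := by
  induction k with
  | zero => simp
  | succ k ih =>
    have : 2 * (k+1) = 2*k + 2 := by ring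
    rw [this, pow_add, ← Matrix.mulVec_mulVec, hA2, Matrix.mulVec_smul, ih,
      smul_smul, pow_succ]
    ring_nf

private lemma Apow_odd (k : ℕ) :
    (Amat ^ (2*k+1)).mulVec ![0,1,0] = ((-2:ℝ)^k) • ![1,0,1] := by
  rw [pow_succ', ← Matrix.mulVec_mulVec, Apow_even, Matrix.mulVec_smul, hAv]

private lemma sqrt2_pow_even (k : ℕ) : (Real.sqrt 2) ^ (2*k) = 2 ^ k := by
  rw [pow_mul, Real.sq_sqrt (by norm_num : (2:ℝ) ≥ 0)]

theorem second_move :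
    (NormedSpace.exp ((Real.pi / (2 * Real.sqrt 2)) •
        (!![0, 1, 0; -1, 0, -1; 0, 1, 0] : Matrix (Fin 3) (Fin 3) ℝ))).mulVec
      ![0, 1, 0] = ![1 / Real.sqrt 2, 0, 1 / Real.sqrt 2] := by
  have hs2 : Real.sqrt 2 ≠ 0 := by positivity
  set t : ℝ := Real.pi / (2 * Real.sqrt 2) with ht
  have hx : Real.sqrt 2 * t = Real.pi / 2 := by
    rw [ht]; field_simp
  set v : Fin 3 → ℝ := ![0,1,0] with hv
  set u : Fin 3 → ℝ := ![1,0,1] with hu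
  let Llin : Matrix (Fin 3) (Fin 3) ℝ →ₗ[ℝ] (Fin 3 → ℝ) :=
    { toFun := fun M => M.mulVec v
      map_add' := fun M N => Matrix.add_mulVec M N v
      map_smul' := fun c M => Matrix.smul_mulVec c M v }
  let L : Matrix (Fin 3) (Fin 3) ℝ →L[ℝ] (Fin 3 → ℝ) :=
    LinearMap.toContinuousLinearMap Llin
  have hsum : Summable (fun n : ℕ => ((Nat.factorial n : ℝ)⁻¹) • (t • Amat)^n) :=
    NormedSpace.expSeries_summable' _
  have h1 : (NormedSpace.exp (t • Amat)).mulVec v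
      = ∑' n : ℕ, (((Nat.factorial n : ℝ)⁻¹) • (t • Amat)^n).mulVec v := by
    rw [NormedSpace.exp_eq_tsum (𝕂 := ℝ)]
    exact ((hsum.hasSum.mapL L).tsum_eq).symm
  have h2 : (fun n : ℕ => (((Nat.factorial n : ℝ)⁻¹) • (t • Amat)^n).mulVec v)
      = fun n : ℕ => (((Nat.factorial n : ℝ)⁻¹) * t^n) • ((Amat^n).mulVec v) := by
    funext n
    rw [smul_pow, Matrix.smul_mulVec, Matrix.smul_mulVec, smul_smul]
  have heven : HasSum (fun k : ℕ => (((Nat.factorial (2*k)) : ℝ)⁻¹ * t^(2*k)) • ((Amat^(2*k)).mulVec v))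
      ((0:ℝ) • v) := by
    have h := ((Real.hasSum_cos (Real.pi/2)).smul_const v)
    rw [Real.cos_pi_div_two] at h
    convert h using 2 with k
    rw [Apow_even, smul_smul, ← hx, mul_pow, sqrt2_pow_even, neg_pow, div_eq_mul_inv]
    rw [hv]
    ring
  have hodd : HasSum (fun k : ℕ => (((Nat.factorial (2*k+1)) : ℝ)⁻¹ * t^(2*k+1)) • ((Amat^(2*k+1)).mulVec v))
      ((1 / Real.sqrt 2 : ℝ) • u) := by
    have h := (((Real.hasSum_sin (Real.pi/2)).div_const (Real.sqrt 2)).smul_const u)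
    rw [Real.sin_pi_div_two] at h
    convert h using 2 with k
    rw [Apow_odd, smul_smul, hu]
    congr 1
    have h2k : (Real.sqrt 2) ^ (2*k+1) = 2^k * Real.sqrt 2 := by
      rw [pow_succ, sqrt2_pow_even]
    rw [← hx, mul_pow, h2k, neg_pow]
    field_simp
  have htot : HasSum (fun n : ℕ => (((Nat.factorial n : ℝ)⁻¹) * t^n) • ((Amat^n).mulVec v))
      ((0:ℝ) • v + (1 / Real.sqrt 2 : ℝ) • u) := HasSum.even_add_odd heven hodd
  show (NormedSpace.exp (t • Amat)).mulVec v = _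
  rw [h1, h2, htot.tsum_eq]
  funext i
  fin_cases i <;> simp [hu, hv]

end
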